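/- arXiv:1103.2392 — 2 statements merged into one kernel-verified Lean document; each statement's English description precedes it below -/
import Mathlib

section
/- Suppose B : I → L(E, H) is differentiable and satisfies (d/dx)(B(x)σ₁(x)) + A B(x) σ₂(x) + B(x) γ(x) = 0, and X : I → L(H) is differentiable with X'(x) = B(x) σ₂(x) B(x)*. If at some point x₀ the Lyapunov equation A X(x₀) + X(x₀) A* + B(x₀) σ₁(x₀) B(x₀)* = 0 holds, then A X(x) + X(x) A* + B(x) σ₁(x) B(x)* = 0 for all x in I. -/
open ContinuousLinearMap

section LyapAux

variable {H E F G : Type*}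
    [NormedAddCommGroup H] [InnerProductSpace ℂ H] [CompleteSpace H]
    [NormedAddCommGroup E] [InnerProductSpace ℂ E] [FiniteDimensional ℂ E]

lemma lyap_bilin {E F G : Type*} [NormedAddCommGroup E] [NormedSpace ℂ E]
    [NormedAddCommGroup F] [NormedSpace ℂ F] [NormedAddCommGroup G] [NormedSpace ℂ G] :
    IsBoundedBilinearMap ℝ fun p : (F →L[ℂ] G) × (E →L[ℂ] F) => p.1.comp p.2 where
  add_left _ _ _ := add_comp _ _ _
  smul_left c f g := by ext; simp
  add_right f _ _ := comp_add _ _ _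
  smul_right c f g := by ext; simp
  bound := ⟨1, one_pos, fun f g => by simpa using opNorm_comp_le f g⟩

lemma lyap_clm_comp {E F G : Type*} [NormedAddCommGroup E] [NormedSpace ℂ E]
    [NormedAddCommGroup F] [NormedSpace ℂ F] [NormedAddCommGroup G] [NormedSpace ℂ G]
    {c : ℝ → F →L[ℂ] G} {c' : F →L[ℂ] G} {d : ℝ → E →L[ℂ] F} {d' : E →L[ℂ] F}
    {s : Set ℝ} {x : ℝ} (hc : HasDerivWithinAt c c' s x) (hd : HasDerivWithinAt d d' s x) :
    HasDerivWithinAt (fun y => (c y).comp (d y)) (c'.comp (d x) + (c x).comp d') s x := by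
  have h := (lyap_bilin.hasFDerivAt (c x, d x)).comp_hasDerivWithinAt x (hc.prodMk hd)
  simpa [IsBoundedBilinearMap.deriv_apply, add_comm, Function.comp_def] using h

set_option synthInstance.maxHeartbeats 1000000 in
lemma lyap_inv (σ : ℝ → E →L[ℂ] E) (hinv : ∀ x, IsUnit (σ x)) (σ' : E →L[ℂ] E)
    {s : Set ℝ} {x : ℝ} (h : HasDerivWithinAt σ σ' s x) :
    HasDerivWithinAt (fun y => Ring.inverse (σ y))
      (-((Ring.inverse (σ x)).comp (σ'.comp (Ring.inverse (σ x))))) s x := by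
  have h1 := hasFDerivAt_ringInverse (𝕜 := ℝ) (hinv x).unit
  rw [(hinv x).unit_spec] at h1
  have h2 := h1.comp_hasDerivWithinAt x h
  have e : Units.val ((hinv x).unit⁻¹) = Ring.inverse (σ x) := by
    rw [← Ring.inverse_unit, (hinv x).unit_spec]
  simpa [e, mul_assoc, mul_def, Function.comp_def, neg_comp, comp_assoc] using h2

noncomputable def lyapAdjLI : (E →L[ℂ] H) →ₗᵢ[ℝ] (H →L[ℂ] E) where
  toFun := adjoint
  map_add' f g := by simp [map_add]
  map_smul' r f := by
    show adjoint (r • f) = r • adjoint f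
    rw [show r • f = (r : ℂ) • f from (Complex.coe_smul r f).symm,
      show r • (adjoint f) = (r : ℂ) • (adjoint f) from (Complex.coe_smul r _).symm]
    rw [show adjoint ((r:ℂ) • f) = (ContinuousLinearMap.adjoint (𝕜:=ℂ) (E:=E) (F:=H)) ((r:ℂ) • f)
      from rfl, LinearIsometryEquiv.map_smulₛₗ]
    simp [Complex.conj_ofReal]
  norm_map' f :=
    (ContinuousLinearMap.adjoint (𝕜 := ℂ) (E := E) (F := H)).norm_map f

lemma lyap_adj {B : ℝ → E →L[ℂ] H} {D : E →L[ℂ] H} {s : Set ℝ} {x : ℝ}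
    (h : HasDerivWithinAt B D s x) :
    HasDerivWithinAt (fun y => adjoint (B y)) (adjoint D) s x :=
  ((lyapAdjLI (E := E) (H := H)).toContinuousLinearMap.hasFDerivAt).comp_hasDerivWithinAt x h

end LyapAux

/-- Lyapunov condition permanence: if `(Bσ₁)' + ABσ₂ + Bγ = 0` and `X' = Bσ₂B*`,
and the Lyapunov equation `AX + XA* + Bσ₁B* = 0` holds at `x₀`, then it holds on
all of the interval `I`. -/
theorem lyapunov_permanence {H E : Type*}
    [NormedAddCommGroup H] [InnerProductSpace ℂ H] [CompleteSpace H]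
    [NormedAddCommGroup E] [InnerProductSpace ℂ E] [FiniteDimensional ℂ E]
    (I : Set ℝ) (hI : Convex ℝ I) (x₀ : ℝ) (hx₀ : x₀ ∈ I)
    (A : H →L[ℂ] H) (B : ℝ → E →L[ℂ] H) (X : ℝ → H →L[ℂ] H)
    (σ₁ σ₂ γ σ₁' : ℝ → E →L[ℂ] E)
    (hσ₁sa : ∀ x, IsSelfAdjoint (σ₁ x)) (hσ₂sa : ∀ x, IsSelfAdjoint (σ₂ x))
    (hσ₁inv : ∀ x, IsUnit (σ₁ x))
    (hσ₁' : ∀ x ∈ I, HasDerivWithinAt σ₁ (σ₁' x) I x)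
    (hγ : ∀ x, γ x + adjoint (γ x) = -σ₁' x)
    (hBdiff : ∀ x ∈ I, DifferentiableWithinAt ℝ B I x)
    (hB : ∀ x ∈ I, HasDerivWithinAt (fun y => (B y).comp (σ₁ y))
      (-((A.comp (B x)).comp (σ₂ x) + (B x).comp (γ x))) I x)
    (hX : ∀ x ∈ I, HasDerivWithinAt X
      (((B x).comp (σ₂ x)).comp (adjoint (B x))) I x)
    (h₀ : A.comp (X x₀) + (X x₀).comp (adjoint A) +
      ((B x₀).comp (σ₁ x₀)).comp (adjoint (B x₀)) = 0) :
    ∀ x ∈ I, A.comp (X x) + (X x).comp (adjoint A) +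
      ((B x).comp (σ₁ x)).comp (adjoint (B x)) = 0 := by
  set F : ℝ → H →L[ℂ] H := fun y => A.comp (X y) + (X y).comp (adjoint A) +
      ((B y).comp (σ₁ y)).comp (adjoint (B y)) with hF
  have key : ∀ z ∈ I, HasDerivWithinAt F 0 I z := by
    intro z hz
    set iv : E →L[ℂ] E := Ring.inverse (σ₁ z) with hiv
    have hc1 : (σ₁ z).comp iv = 1 := Ring.mul_inverse_cancel _ (hσ₁inv z)
    have hc2 : iv.comp (σ₁ z) = 1 := Ring.inverse_mul_cancel _ (hσ₁inv z)
    have c1 : ∀ t : H →L[ℂ] E, (σ₁ z).comp (iv.comp t) = t := fun t => by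
      rw [← comp_assoc, hc1, one_def, id_comp]
    have c2 : ∀ t : H →L[ℂ] E, iv.comp ((σ₁ z).comp t) = t := fun t => by
      rw [← comp_assoc, hc2, one_def, id_comp]
    have hinv : HasDerivWithinAt (fun y => Ring.inverse (σ₁ y))
        (-(iv.comp ((σ₁' z).comp iv))) I z := lyap_inv σ₁ hσ₁inv (σ₁' z) (hσ₁' z hz)
    -- derivative of B itself
    have hBz : HasDerivWithinAt B
        ((-((A.comp (B z)).comp (σ₂ z) + (B z).comp (γ z))).comp iv +
          ((B z).comp (σ₁ z)).comp (-(iv.comp ((σ₁' z).comp iv)))) I z := by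
      have h := lyap_clm_comp (hB z hz) hinv
      have hfun : (fun y => ((B y).comp (σ₁ y)).comp (Ring.inverse (σ₁ y))) = B := by
        funext y
        rw [comp_assoc, show (σ₁ y).comp (Ring.inverse (σ₁ y)) = 1 from
          Ring.mul_inverse_cancel _ (hσ₁inv y), one_def, comp_id]
      rwa [hfun] at h
    set D : E →L[ℂ] H := (-((A.comp (B z)).comp (σ₂ z) + (B z).comp (γ z))).comp iv +
          ((B z).comp (σ₁ z)).comp (-(iv.comp ((σ₁' z).comp iv))) with hD
    have hadj : HasDerivWithinAt (fun y => adjoint (B y)) (adjoint D) I z := lyap_adj hBz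
    have h1 : HasDerivWithinAt (fun y => A.comp (X y))
        (A.comp (((B z).comp (σ₂ z)).comp (adjoint (B z)))) I z := by
      have h := lyap_clm_comp (hasDerivWithinAt_const z I A) (hX z hz)
      rwa [zero_comp, zero_add] at h
    have h2 : HasDerivWithinAt (fun y => (X y).comp (adjoint A))
        ((((B z).comp (σ₂ z)).comp (adjoint (B z))).comp (adjoint A)) I z := by
      have h := lyap_clm_comp (hX z hz) (hasDerivWithinAt_const z I (adjoint A))
      rwa [comp_zero, add_zero] at h
    have h3 := lyap_clm_comp (hB z hz) hadj
    have htot := (h1.add h2).add h3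
    -- now show the total derivative vanishes
    have hσ₂z : adjoint (σ₂ z) = σ₂ z := by
      rw [← star_eq_adjoint]; exact hσ₂sa z
    have hσ₁z : adjoint (σ₁ z) = σ₁ z := by
      rw [← star_eq_adjoint]; exact hσ₁sa z
    have hivz : adjoint iv = iv := by
      rw [← star_eq_adjoint, hiv, ← Ring.inverse_star, star_eq_adjoint, hσ₁z]
    have hσ₁'z : σ₁' z = -(γ z + adjoint (γ z)) := neg_eq_iff_eq_neg.mp (hγ z).symm
    have hzero : A.comp (((B z).comp (σ₂ z)).comp (adjoint (B z))) +
        (((B z).comp (σ₂ z)).comp (adjoint (B z))).comp (adjoint A) +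
        ((-((A.comp (B z)).comp (σ₂ z) + (B z).comp (γ z))).comp (adjoint (B z)) +
          ((B z).comp (σ₁ z)).comp (adjoint D)) = 0 := by
      rw [hD]
      simp only [hσ₁'z, map_add, map_neg, adjoint_comp, adjoint_adjoint, hσ₂z, hσ₁z, hivz,
        comp_add, add_comp, comp_neg, neg_comp, comp_assoc, c1, c2, comp_id, id_comp]
      abel
    rw [hzero] at htot
    exact htot
  intro x hx
  have hb := Convex.norm_image_sub_le_of_norm_hasDerivWithin_le (C := 0)
    (f' := fun _ => (0 : H →L[ℂ] H)) key (fun y _ => by simp) hI hx₀ hx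
  have hFx : F x = F x₀ := by
    rw [zero_mul] at hb
    have := norm_le_zero_iff.mp hb
    exact sub_eq_zero.mp this
  calc A.comp (X x) + (X x).comp (adjoint A) + ((B x).comp (σ₁ x)).comp (adjoint (B x))
      = F x := rfl
    _ = F x₀ := hFx
    _ = 0 := h₀
end

section
/- Given a vessel with operators A, B(x), X(x) satisfying X'(x) = B(x) σ₂ B(x)* with σ₂ = [[1,0],[0,0]], and defining Ω(x,y) = ⟨X(x₀)⁻¹ B(y) e₁, B(x) e₁⟩ and K(x,y) = −⟨X(x)⁻¹ B(y) e₁, B(x) e₁⟩ where e₁ = (1,0)ᵀ, the Gelfand–Levitan equation holds: K(x,y) + Ω(x,y) + ∫_{x₀}^x K(x,t) Ω(t,y) dt = 0. -/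
open ContinuousLinearMap

/-- The first standard basis vector `(1,0)ᵀ` of `ℂ²`. -/
noncomputable def e₁ : EuclideanSpace ℂ (Fin 2) := EuclideanSpace.single 0 1

/-- The Gelfand–Levitan equation: with
`Ω(x,y) = ⟨X(x₀)⁻¹ B(y)e₁, B(x)e₁⟩` and `K(x,y) = −⟨X(x)⁻¹ B(y)e₁, B(x)e₁⟩`,
one has `K(x,y) + Ω(x,y) + ∫_{x₀}^x K(x,t) Ω(t,y) dt = 0`. -/
theorem gelfand_levitan {H : Type*}
    [NormedAddCommGroup H] [InnerProductSpace ℂ H] [CompleteSpace H]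
    (x₀ : ℝ) (B : ℝ → EuclideanSpace ℂ (Fin 2) →L[ℂ] H) (hB : Continuous B)
    (X Xinv : ℝ → H →L[ℂ] H)
    (hX1 : ∀ x, (X x).comp (Xinv x) = 1) (hX2 : ∀ x, (Xinv x).comp (X x) = 1)
    (hXder : ∀ x, X x = X x₀ +
      ∫ t in x₀..x, (innerSL ℂ (B t e₁)).smulRight (B t e₁))
    (hXinvcont : Continuous Xinv)
    (Ω K : ℝ → ℝ → ℂ)
    (hΩ : ∀ x y, Ω x y = inner ℂ (B x e₁) (Xinv x₀ (B y e₁)))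
    (hK : ∀ x y, K x y = -(inner ℂ (B x e₁) (Xinv x (B y e₁)) : ℂ)) :
    ∀ x y, K x y + Ω x y + ∫ t in x₀..x, K x t * Ω t y = 0 := by
  intro x y
  set u : H := Xinv x₀ (B y e₁) with hu
  set F : ℝ → H →L[ℂ] H := fun t => (innerSL ℂ (B t e₁)).smulRight (B t e₁) with hF
  have hBe : Continuous fun t => B t e₁ := hB.clm_apply continuous_const
  have hFcont : Continuous F := by
    have h1 : Continuous fun t => innerSL ℂ (B t e₁) :=
      (map_continuous (innerSL ℂ)).comp hBe
    have : Continuous fun t =>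
        smulRightL ℂ H H (innerSL ℂ (B t e₁)) (B t e₁) :=
      ((smulRightL ℂ H H).continuous.comp h1).clm_apply hBe
    exact this
  have hFint : IntervalIntegrable F MeasureTheory.volume x₀ x :=
    hFcont.intervalIntegrable _ _
  set L : (H →L[ℂ] H) →L[ℂ] ℂ :=
    ((innerSL ℂ (B x e₁)).comp (Xinv x)).comp (ContinuousLinearMap.apply ℂ H u) with hLdef
  have hL : ∀ T : H →L[ℂ] H, L T = inner ℂ (B x e₁) ((Xinv x) (T u)) := fun T => rfl
  have key : (∫ t in x₀..x, K x t * Ω t y) = -(L (∫ t in x₀..x, F t)) := by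
    rw [← ContinuousLinearMap.intervalIntegral_comp_comm L hFint,
      ← intervalIntegral.integral_neg]
    apply intervalIntegral.integral_congr
    intro t _
    show K x t * Ω t y = -(L (F t))
    rw [hK, hΩ, hL]
    simp only [hF, ContinuousLinearMap.smulRight_apply, innerSL_apply_apply, map_smul,
      inner_smul_right, ← hu]
    ring
  have hint : (∫ t in x₀..x, F t) = X x - X x₀ := by
    rw [hXder x]; abel
  have h1 : Xinv x (X x u) = u := by
    have := congrArg (fun T : H →L[ℂ] H => T u) (hX2 x)
    simpa using this
  have h2 : X x₀ u = B y e₁ := by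
    have := congrArg (fun T : H →L[ℂ] H => T (B y e₁)) (hX1 x₀)
    simpa [hu] using this
  rw [key, hint, hK, hΩ]
  simp only [hL, map_sub, sub_apply, coe_sub', Pi.sub_apply, inner_sub_right, h1, h2, ← hu]
  ring
end
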